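/- Let A be a finite abelian group and g : A → ℂ a function with |g| ≤ 1. If g correlates with a projected phase polynomial of degree k — i.e., there is an extension τ : B ↠ A with kernel C and a phase polynomial φ : B → ℂ of degree k such that |⟨g ∘ τ, φ⟩_B| ≥ δ — then ‖g‖_{U^{k+1}(A)} ≥ δ. -/

import Mathlib

/-- Multiplicative derivative: `Δ_t φ (x) = φ x * conj (φ (x+t))`. -/
noncomputable def phaseDeriv {A : Type*} [AddCommGroup A] (φ : A → ℂ) (t : A) : A → ℂ :=
  fun x => φ x * (starRingEnd ℂ) (φ (x + t))

/-- `φ` is a phase polynomial of degree `k`: it has modulus `1` and any `k+1`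
consecutive multiplicative derivatives yield the constant `1`. -/
noncomputable def IsPhasePoly {A : Type*} [AddCommGroup A] (k : ℕ) (φ : A → ℂ) : Prop :=
  (∀ x, ‖φ x‖ = 1) ∧
    ∀ t : Fin (k + 1) → A, ∀ x, ((List.ofFn t).foldl phaseDeriv φ) x = 1


/-- The Gowers uniformity norm `‖f‖_{U^{k+1}}` on a finite abelian group. -/
noncomputable def gowersNorm {A : Type*} [AddCommGroup A] [Fintype A] (k : ℕ) (f : A → ℂ) : ℝ :=
  (‖∑ x : A, ∑ t : Fin (k + 1) → A, ∏ ω : Fin (k + 1) → Bool,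
      (fun z => (starRingEnd ℂ) z)^[∑ i, if ω i then 1 else 0]
        (f (x + ∑ i, if ω i then t i else 0))‖
    / (Fintype.card A : ℝ) ^ (k + 2)) ^ ((1 : ℝ) / 2 ^ (k + 1))


noncomputable def citer (m : ℕ) (z : ℂ) : ℂ := (fun z => (starRingEnd ℂ) z)^[m] z

lemma citer_mul (m : ℕ) (a b : ℂ) : citer m (a * b) = citer m a * citer m b := by
  induction m with
  | zero => rfl
  | succ n ih =>
    simp only [citer, Function.iterate_succ_apply'] at *
    rw [ih, map_mul]

lemma citer_conj (m : ℕ) (a : ℂ) : citer m ((starRingEnd ℂ) a) = citer (m + 1) a := by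
  simp [citer, Function.iterate_succ_apply]

lemma citer_conj' (m : ℕ) (a : ℂ) : citer m ((starRingEnd ℂ) a) = (starRingEnd ℂ) (citer m a) := by
  rw [citer_conj]; simp [citer, Function.iterate_succ_apply']

lemma citer_one (m : ℕ) : citer m 1 = 1 := by
  induction m with
  | zero => rfl
  | succ n ih => simp only [citer, Function.iterate_succ_apply'] at *; rw [ih, map_one]

noncomputable def cubeProd {B : Type*} [AddCommGroup B] (n : ℕ) (f : B → ℂ)
    (x : B) (t : Fin n → B) : ℂ :=
  ∏ ω : Fin n → Bool, citer (∑ i, if ω i then 1 else 0) (f (x + ∑ i, if ω i then t i else 0))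

noncomputable def gSum {B : Type*} [AddCommGroup B] [Fintype B] (n : ℕ) (f : B → ℂ) : ℂ :=
  ∑ x : B, ∑ t : Fin n → B, cubeProd n f x t

lemma gowersNorm_eq {A : Type*} [AddCommGroup A] [Fintype A] (k : ℕ) (f : A → ℂ) :
    gowersNorm k f = (‖gSum (k + 1) f‖ / (Fintype.card A : ℝ) ^ (k + 2)) ^ ((1 : ℝ) / 2 ^ (k + 1)) := rfl

example : True := trivial

lemma cubeProd_zero {B : Type*} [AddCommGroup B] (f : B → ℂ) (x : B) (t : Fin 0 → B) :
    cubeProd 0 f x t = f x := by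
  simp [cubeProd, citer]

lemma cubeProd_split {B : Type*} [AddCommGroup B] (n : ℕ) (f : B → ℂ) (x : B)
    (t : Fin (n + 1) → B) :
    cubeProd (n + 1) f x t = cubeProd n (phaseDeriv f (t 0)) x (fun i => t i.succ) := by
  unfold cubeProd
  rw [← (Fin.consEquiv (fun _ : Fin (n+1) => Bool)).prod_comp]
  rw [Fintype.prod_prod_type]
  rw [Fintype.prod_bool]
  rw [← Finset.prod_mul_distrib]
  apply Finset.prod_congr rfl
  intro ω' _
  have hw : ∀ b : Bool, (∑ i, if (Fin.cons b ω' : Fin (n+1) → Bool) i then 1 else 0)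
      = (if b then 1 else 0) + ∑ i : Fin n, if ω' i then 1 else 0 := by
    intro b; rw [Fin.sum_univ_succ]; simp
  have hp : ∀ b : Bool, (∑ i, if (Fin.cons b ω' : Fin (n+1) → Bool) i then t i else 0)
      = (if b then t 0 else 0) + ∑ i : Fin n, if ω' i then t i.succ else 0 := by
    intro b; rw [Fin.sum_univ_succ]; simp
  simp only [Fin.consEquiv_apply]
  rw [hw true, hw false, hp true, hp false]
  simp only [if_true, Bool.false_eq_true, if_false, zero_add]
  set S := ∑ i : Fin n, if ω' i = true then t i.succ else 0 with hS
  set w := ∑ i : Fin n, if ω' i = true then 1 else 0 with hww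
  have hx : x + (t 0 + S) = (x + S) + t 0 := by abel
  rw [hx, show (1:ℕ) + w = w + 1 from by omega, ← citer_conj, ← citer_mul, mul_comm]
  rfl

section Core
variable {B : Type*} [AddCommGroup B] [Fintype B]


lemma gSum_zero (f : B → ℂ) : gSum 0 f = ∑ x : B, f x := by
  unfold gSum
  refine Finset.sum_congr rfl fun x _ => ?_
  rw [Fintype.sum_unique fun t : Fin 0 → B => cubeProd 0 f x t, cubeProd_zero]

lemma gSum_succ (n : ℕ) (f : B → ℂ) :
    gSum (n + 1) f = ∑ s : B, gSum n (phaseDeriv f s) := by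
  unfold gSum
  simp only [cubeProd_split]
  have h1 : ∀ x : B, (∑ t : Fin (n+1) → B, cubeProd n (phaseDeriv f (t 0)) x (fun i => t i.succ))
      = ∑ s : B, ∑ t' : Fin n → B, cubeProd n (phaseDeriv f s) x t' := by
    intro x
    rw [← (Fin.consEquiv (fun _ : Fin (n+1) => B)).sum_comp, Fintype.sum_prod_type]
    refine Finset.sum_congr rfl fun s _ => Finset.sum_congr rfl fun t' _ => ?_
    simp only [Fin.consEquiv_apply, Fin.cons_zero, Fin.cons_succ]
  simp only [h1]
  rw [Finset.sum_comm]

lemma gSum_one (f : B → ℂ) :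
    gSum 1 f = ((‖∑ x : B, f x‖ ^ 2 : ℝ) : ℂ) := by
  rw [gSum_succ, ]
  simp only [gSum_zero]
  have : ∀ s : B, ∑ x : B, phaseDeriv f s x = ∑ x : B, f x * (starRingEnd ℂ) (f (x + s)) := by
    intro s; rfl
  simp only [this]
  rw [Finset.sum_comm]
  have h2 : ∀ x : B, ∑ s : B, f x * (starRingEnd ℂ) (f (x + s))
      = f x * (starRingEnd ℂ) (∑ y : B, f y) := by
    intro x
    rw [← Finset.mul_sum, ← map_sum]
    congr 1
    exact congrArg _ (Fintype.sum_equiv (Equiv.addLeft x) _ _ fun s => rfl)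
  simp only [h2]
  rw [← Finset.sum_mul, Complex.mul_conj]
  norm_cast
  rw [Complex.normSq_eq_norm_sq]

lemma gSum_key (n : ℕ) : ∀ f : B → ℂ, ∃ r : ℝ, 0 ≤ r ∧ gSum (n + 1) f = (r : ℂ) ∧
    ‖∑ x : B, f x‖ ^ (2 ^ (n + 1)) ≤
      (Fintype.card B : ℝ) ^ (2 ^ (n + 1) - (n + 2)) * r := by
  induction n with
  | zero =>
    intro f
    refine ⟨‖∑ x, f x‖ ^ 2, by positivity, gSum_one f, ?_⟩
    simp
  | succ n ih =>
    intro f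
    choose r hr hgs hineq using fun s => ih (phaseDeriv f s)
    refine ⟨∑ s, r s, Finset.sum_nonneg fun s _ => hr s, ?_, ?_⟩
    · rw [gSum_succ]
      push_cast
      exact Finset.sum_congr rfl fun s _ => hgs s
    · have hM : (n + 2) ≤ 2 ^ (n + 1) := Nat.lt_two_pow_self (n := n + 1)
      set card : ℝ := (Fintype.card B : ℝ) with hcard
      have hcard0 : (0 : ℝ) ≤ card := by positivity
      set M : ℕ := 2 ^ (n + 1) with hMdef
      have h1 : ‖∑ x : B, f x‖ ^ 2 ≤ ∑ s : B, ‖∑ x : B, phaseDeriv f s x‖ := by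
        have := gSum_one f
        have h2 : gSum 1 f = ∑ s : B, ∑ x : B, phaseDeriv f s x := by
          rw [gSum_succ]; exact Finset.sum_congr rfl fun s _ => gSum_zero _
        calc ‖∑ x : B, f x‖ ^ 2 = ‖gSum 1 f‖ := by
              rw [this, Complex.norm_real, Real.norm_of_nonneg (by positivity)]
          _ ≤ ∑ s : B, ‖∑ x : B, phaseDeriv f s x‖ := by
              rw [h2]; exact norm_sum_le _ _
      have h3 : (∑ s : B, ‖∑ x : B, phaseDeriv f s x‖) ^ M
          ≤ card ^ (M - 1) * ∑ s : B, ‖∑ x : B, phaseDeriv f s x‖ ^ M := by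
        obtain ⟨m, hm⟩ : ∃ m, M = m + 1 := ⟨M - 1, by omega⟩
        rw [hm]
        have := pow_sum_le_card_mul_sum_pow
          (s := (Finset.univ : Finset B)) (f := fun s => ‖∑ x : B, phaseDeriv f s x‖)
          (fun i _ => norm_nonneg _) m
        simpa [Finset.card_univ, hm] using this
      have h4 : (∑ s : B, ‖∑ x : B, phaseDeriv f s x‖ ^ M)
          ≤ card ^ (M - (n + 2)) * ∑ s, r s := by
        rw [Finset.mul_sum]
        exact Finset.sum_le_sum fun s _ => hineq s
      calc ‖∑ x : B, f x‖ ^ 2 ^ (n + 2)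
          = (‖∑ x : B, f x‖ ^ 2) ^ M := by rw [← pow_mul]; congr 1; rw [hMdef]; ring
        _ ≤ (∑ s : B, ‖∑ x : B, phaseDeriv f s x‖) ^ M := by
            apply pow_le_pow_left₀ (by positivity) h1
        _ ≤ card ^ (M - 1) * ∑ s : B, ‖∑ x : B, phaseDeriv f s x‖ ^ M := h3
        _ ≤ card ^ (M - 1) * (card ^ (M - (n + 2)) * ∑ s, r s) := by
            apply mul_le_mul_of_nonneg_left h4 (by positivity)
        _ = card ^ (2 ^ (n + 2) - (n + 3)) * ∑ s, r s := by
            rw [← mul_assoc, ← pow_add]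
            congr 2
            have h2M : 2 ^ (n + 2) = M + M := by rw [hMdef]; ring
            omega

end Core

section PhaseRemoval

variable {B : Type*} [AddCommGroup B]

lemma cubeProd_foldl (n : ℕ) (φ : B → ℂ) (x : B) (t : Fin n → B) :
    cubeProd n φ x t = ((List.ofFn t).foldl phaseDeriv φ) x := by
  induction n generalizing φ with
  | zero => rw [cubeProd_zero]; simp
  | succ n ih =>
    rw [cubeProd_split, ih, List.ofFn_succ, List.foldl_cons]

lemma cubeProd_mul (n : ℕ) (f h : B → ℂ) (x : B) (t : Fin n → B) :
    cubeProd n (fun b => f b * h b) x t = cubeProd n f x t * cubeProd n h x t := by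
  unfold cubeProd
  rw [← Finset.prod_mul_distrib]
  exact Finset.prod_congr rfl fun ω _ => citer_mul _ _ _

lemma cubeProd_conj (n : ℕ) (φ : B → ℂ) (x : B) (t : Fin n → B) :
    cubeProd n (fun b => (starRingEnd ℂ) (φ b)) x t = (starRingEnd ℂ) (cubeProd n φ x t) := by
  unfold cubeProd
  rw [map_prod]
  exact Finset.prod_congr rfl fun ω _ => citer_conj' _ _

end PhaseRemoval

section Transfer

variable {A B : Type*} [AddCommGroup A] [Fintype A] [AddCommGroup B] [Fintype B]
variable [DecidableEq A]
variable (τ : B →+ A)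

lemma fiber_card (hτ : Function.Surjective τ) (a : A) :
    (Finset.univ.filter fun b => τ b = a).card
      = (Finset.univ.filter fun b => τ b = (0 : A)).card := by
  obtain ⟨b0, hb0⟩ := hτ a
  apply Finset.card_bij' (fun b _ => b - b0) (fun c _ => c + b0)
  · intro b hb
    simp only [Finset.mem_filter, Finset.mem_univ, true_and] at hb ⊢
    rw [map_sub, hb, hb0, sub_self]
  · intro c hc
    simp only [Finset.mem_filter, Finset.mem_univ, true_and] at hc ⊢
    rw [map_add, hc, hb0, zero_add]
  · intro b _; abel
  · intro c _; abel

lemma sum_comp_tau (hτ : Function.Surjective τ) (G : A → ℂ) :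
    ∑ b : B, G (τ b)
      = ((Finset.univ.filter fun b : B => τ b = (0 : A)).card : ℂ) * ∑ a : A, G a := by
  calc ∑ b : B, G (τ b)
      = ∑ a : A, ∑ b ∈ Finset.univ.filter fun b : B => τ b = a, G a :=
        (Finset.sum_fiberwise' _ _ _).symm
    _ = _ := by
        rw [Finset.mul_sum]
        refine Finset.sum_congr rfl fun a _ => ?_
        rw [Finset.sum_const, fiber_card τ hτ a, nsmul_eq_mul]

lemma sum_comp_tau_pi (hτ : Function.Surjective τ) (n : ℕ) (H : (Fin n → A) → ℂ) :
    ∑ t : Fin n → B, H (fun i => τ (t i))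
      = ((Finset.univ.filter fun b : B => τ b = (0 : A)).card : ℂ) ^ n
          * ∑ t' : Fin n → A, H t' := by
  induction n with
  | zero =>
    rw [pow_zero, one_mul]
    rw [Fintype.sum_unique, Fintype.sum_unique]
    congr 1
    exact funext fun i => i.elim0
  | succ n ih =>
    set m : ℂ := ((Finset.univ.filter fun b : B => τ b = (0 : A)).card : ℂ) with hm
    have lhs : ∑ t : Fin (n+1) → B, H (fun i => τ (t i))
        = ∑ s : B, ∑ t' : Fin n → B, H (Fin.cons (τ s) (fun i => τ (t' i))) := by
      rw [← (Fin.consEquiv (fun _ : Fin (n+1) => B)).sum_comp, Fintype.sum_prod_type]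
      refine Finset.sum_congr rfl fun s _ => Finset.sum_congr rfl fun t' _ => ?_
      congr 1
      funext i
      refine Fin.cases ?_ ?_ i <;> simp [Fin.consEquiv_apply]
    have rhs : ∑ t' : Fin (n+1) → A, H t'
        = ∑ a : A, ∑ u : Fin n → A, H (Fin.cons a u) := by
      rw [← (Fin.consEquiv (fun _ : Fin (n+1) => A)).sum_comp, Fintype.sum_prod_type]
      rfl
    rw [lhs, rhs]
    have step : ∀ s : B, ∑ t' : Fin n → B, H (Fin.cons (τ s) (fun i => τ (t' i)))
        = m ^ n * ∑ u : Fin n → A, H (Fin.cons (τ s) u) :=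
      fun s => ih (fun u => H (Fin.cons (τ s) u))
    simp only [step]
    rw [← Finset.mul_sum, sum_comp_tau τ hτ (fun a => ∑ u : Fin n → A, H (Fin.cons a u))]
    rw [← hm]
    ring

lemma gSum_comp (hτ : Function.Surjective τ) (n : ℕ) (g : A → ℂ) :
    gSum n (fun b => g (τ b))
      = ((Finset.univ.filter fun b : B => τ b = (0 : A)).card : ℂ) ^ (n + 1) * gSum n g := by
  set m : ℂ := ((Finset.univ.filter fun b : B => τ b = (0 : A)).card : ℂ) with hm
  unfold gSum
  have hpt : ∀ (x : B) (t : Fin n → B),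
      cubeProd n (fun b => g (τ b)) x t = cubeProd n g (τ x) (fun i => τ (t i)) := by
    intro x t
    unfold cubeProd
    refine Finset.prod_congr rfl fun ω _ => congrArg _ ?_
    show g (τ (x + ∑ i : Fin n, if ω i = true then t i else 0))
        = g (τ x + ∑ i : Fin n, if ω i = true then τ (t i) else 0)
    congr 1
    rw [map_add, map_sum]
    congr 1
    exact Finset.sum_congr rfl fun i _ => by rw [apply_ite τ, map_zero]
  simp only [hpt]
  have h1 : ∀ x : B, ∑ t : Fin n → B, cubeProd n g (τ x) (fun i => τ (t i))
      = m ^ n * ∑ t' : Fin n → A, cubeProd n g (τ x) t' :=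
    fun x => sum_comp_tau_pi τ hτ n (cubeProd n g (τ x))
  simp only [h1]
  rw [← Finset.mul_sum, sum_comp_tau τ hτ (fun a => ∑ t' : Fin n → A, cubeProd n g a t'), ← hm]
  ring

lemma card_eq_fiber_mul (hτ : Function.Surjective τ) :
    Fintype.card B = (Finset.univ.filter fun b : B => τ b = (0 : A)).card * Fintype.card A := by
  have := sum_comp_tau τ hτ (fun _ => (1 : ℂ))
  simp only [Finset.sum_const, Finset.card_univ, nsmul_eq_mul, mul_one] at this
  exact_mod_cast this

lemma fiber_pos : 0 < (Finset.univ.filter fun b : B => τ b = (0 : A)).card :=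
  Finset.card_pos.2 ⟨0, by simp⟩

end Transfer

/-- Correlation with a projected phase polynomial of degree  forces a large
 norm. -/
theorem stmt_10 {A B : Type*} [AddCommGroup A] [Fintype A] [AddCommGroup B] [Fintype B]
    (τ : B →+ A) (hτ : Function.Surjective τ) (k : ℕ) (g : A → ℂ)
    (hg : ∀ a, ‖g a‖ ≤ 1) (φ : B → ℂ) (hφ : IsPhasePoly k φ) (δ : ℝ)
    (hcorr : δ ≤ ‖(Fintype.card B : ℂ)⁻¹ * ∑ b : B, g (τ b) * (starRingEnd ℂ) (φ b)‖) :
    δ ≤ gowersNorm k g := by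
  classical
  set f : B → ℂ := fun b => g (τ b) * (starRingEnd ℂ) (φ b) with hf
  have hremove : gSum (k + 1) f = gSum (k + 1) (fun b => g (τ b)) := by
    unfold gSum
    refine Finset.sum_congr rfl fun x _ => Finset.sum_congr rfl fun t _ => ?_
    rw [hf]
    have : cubeProd (k+1) (fun b => g (τ b) * (starRingEnd ℂ) (φ b)) x t
        = cubeProd (k+1) (fun b => g (τ b)) x t
          * cubeProd (k+1) (fun b => (starRingEnd ℂ) (φ b)) x t := cubeProd_mul _ _ _ _ _
    rw [this, cubeProd_conj, cubeProd_foldl (k+1) φ x t, hφ.2 t x, map_one, mul_one]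
  obtain ⟨r, hr0, hgr, hineq⟩ := gSum_key k f
  set mN : ℕ := (Finset.univ.filter fun b : B => τ b = (0 : A)).card with hmN
  have hmpos : 0 < mN := fiber_pos τ
  have hcardB : Fintype.card B = mN * Fintype.card A := card_eq_fiber_mul τ hτ
  have hcomp : gSum (k + 1) f = (mN : ℂ) ^ (k + 2) * gSum (k + 1) g := by
    rw [hremove, gSum_comp τ hτ]
  set N : ℝ := ‖gSum (k + 1) g‖ with hN
  have hrnorm : r = ‖gSum (k + 1) f‖ := by
    rw [hgr, Complex.norm_real, Real.norm_of_nonneg hr0]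
  have hrN : r = (mN : ℝ) ^ (k + 2) * N := by
    rw [hrnorm, hcomp, norm_mul, norm_pow, Complex.norm_natCast, hN]
  set cA : ℝ := (Fintype.card A : ℝ) with hcA
  have hcA0 : (0 : ℝ) < cA := by
    rw [hcA]; exact_mod_cast Fintype.card_pos
  have hN0 : 0 ≤ N := norm_nonneg _
  have hgow : gowersNorm k g = (N / cA ^ (k + 2)) ^ ((1 : ℝ) / 2 ^ (k + 1)) :=
    gowersNorm_eq k g
  rcases le_or_gt δ 0 with hδ | hδ
  · refine hδ.trans ?_
    rw [hgow]
    positivity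
  · set M : ℕ := 2 ^ (k + 1) with hM
    have hMk : k + 2 ≤ M := Nat.lt_two_pow_self (n := k + 1)
    set cB : ℝ := (Fintype.card B : ℝ) with hcB
    have hcB0 : (0 : ℝ) < cB := by rw [hcB]; exact_mod_cast Fintype.card_pos
    have hcBm : cB = (mN : ℝ) * cA := by rw [hcB, hcA, hcardB]; push_cast; ring
    have h1 : δ ≤ cB⁻¹ * ‖∑ b : B, f b‖ := by
      refine hcorr.trans_eq ?_
      rw [norm_mul, norm_inv, Complex.norm_natCast, hcB]
    have key : δ ^ M ≤ N / cA ^ (k + 2) := by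
      have h2 : δ ^ M ≤ (cB⁻¹ * ‖∑ b : B, f b‖) ^ M :=
        pow_le_pow_left₀ hδ.le h1 M
      have h3 : (cB⁻¹ * ‖∑ b : B, f b‖) ^ M ≤ cB⁻¹ ^ M * (cB ^ (M - (k + 2)) * r) := by
        rw [mul_pow]
        exact mul_le_mul_of_nonneg_left hineq (by positivity)
      have h4 : cB⁻¹ ^ M * (cB ^ (M - (k + 2)) * r) = r / cB ^ (k + 2) := by
        rw [pow_sub₀ cB (ne_of_gt hcB0) hMk]
        field_simp
        rw [← mul_pow, one_div, inv_mul_cancel₀ (ne_of_gt hcB0), one_pow, one_mul]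
      have h5 : r / cB ^ (k + 2) = N / cA ^ (k + 2) := by
        rw [hrN, hcBm, mul_pow]
        have hmn0 : ((mN : ℝ)) ^ (k + 2) ≠ 0 := pow_ne_zero _ (by exact_mod_cast hmpos.ne')
        rw [mul_div_mul_left _ _ hmn0]
      calc δ ^ M ≤ (cB⁻¹ * ‖∑ b : B, f b‖) ^ M := h2
        _ ≤ cB⁻¹ ^ M * (cB ^ (M - (k + 2)) * r) := h3
        _ = r / cB ^ (k + 2) := h4
        _ = N / cA ^ (k + 2) := h5
    have hMR : ((M : ℕ) : ℝ) = (2 : ℝ) ^ (k + 1) := by push_cast [hM]; ring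
    calc δ = (δ ^ M) ^ ((1 : ℝ) / M) := by
          rw [← Real.rpow_natCast δ M, ← Real.rpow_mul hδ.le]
          rw [mul_one_div, div_self (by positivity), Real.rpow_one]
      _ ≤ (N / cA ^ (k + 2)) ^ ((1 : ℝ) / M) := by
          apply Real.rpow_le_rpow (by positivity) key (by positivity)
      _ = gowersNorm k g := by rw [hgow, hMR]
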